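/- Layerwise sandwich bound for L layers: let z^{(ℓ)} be the Deep-LSE recursion with nonnegative skips α^{(ℓ)}, and let z̄^{(ℓ)} be the corresponding max-affine recursion (replacing every LSE_{T_ℓ} by the pointwise maximum). Then for every ℓ and every x, z̄^{(ℓ)}(x) ≤ z^{(ℓ)}(x) ≤ z̄^{(ℓ)}(x) + Δ_ℓ, where Δ_1 = T_1 log K_1 and Δ_ℓ = T_ℓ log K_ℓ + α_max^{(ℓ)} Δ_{ℓ−1} with α_max^{(ℓ)} = max_k α_k^{(ℓ)}. -/

import Mathlib

open Finset

noncomputable def LSE {m : ℕ} (T : ℝ) (u : Fin m → ℝ) : ℝ :=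
  T * Real.log (∑ i, Real.exp (u i / T))

/-- Deep-LSE recursion with widths `K ℓ + 1` (so every layer is nonempty). -/
noncomputable def deepLSE (d : ℕ) (K : ℕ → ℕ) (T : ℕ → ℝ)
    (A : (ℓ : ℕ) → Fin (K ℓ + 1) → Fin d → ℝ) (b : (ℓ : ℕ) → Fin (K ℓ + 1) → ℝ)
    (α : (ℓ : ℕ) → Fin (K ℓ + 1) → ℝ) : ℕ → (Fin d → ℝ) → ℝ
  | 0 => fun x => LSE (T 0) (fun k => ∑ j, A 0 k j * x j + b 0 k)
  | (ℓ + 1) => fun x => LSE (T (ℓ + 1)) (fun k =>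
      α (ℓ + 1) k * deepLSE d K T A b α ℓ x + ∑ j, A (ℓ + 1) k j * x j + b (ℓ + 1) k)

/-- Max-affine surrogate recursion (every `LSE` replaced by a pointwise maximum). -/
noncomputable def deepMaxAffine (d : ℕ) (K : ℕ → ℕ)
    (A : (ℓ : ℕ) → Fin (K ℓ + 1) → Fin d → ℝ) (b : (ℓ : ℕ) → Fin (K ℓ + 1) → ℝ)
    (α : (ℓ : ℕ) → Fin (K ℓ + 1) → ℝ) : ℕ → (Fin d → ℝ) → ℝ
  | 0 => fun x => univ.sup' univ_nonempty (fun k => ∑ j, A 0 k j * x j + b 0 k)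
  | (ℓ + 1) => fun x => univ.sup' univ_nonempty (fun k =>
      α (ℓ + 1) k * deepMaxAffine d K A b α ℓ x + ∑ j, A (ℓ + 1) k j * x j + b (ℓ + 1) k)

/-- Accumulated slack: `Δ₀ = T₀ log K₀` and `Δ_{ℓ+1} = T_{ℓ+1} log K_{ℓ+1} + α_max Δ_ℓ`. -/
noncomputable def slack (K : ℕ → ℕ) (T : ℕ → ℝ)
    (α : (ℓ : ℕ) → Fin (K ℓ + 1) → ℝ) : ℕ → ℝ
  | 0 => T 0 * Real.log (K 0 + 1)
  | (ℓ + 1) => T (ℓ + 1) * Real.log (K (ℓ + 1) + 1)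
      + (univ.sup' univ_nonempty (α (ℓ + 1))) * slack K T α ℓ

lemma sum_exp_pos {m : ℕ} [NeZero m] (u : Fin m → ℝ) : 0 < ∑ i, Real.exp (u i) :=
  Finset.sum_pos (fun i _ => Real.exp_pos _) (univ_nonempty)

lemma max_le_LSE {m : ℕ} [NeZero m] {T : ℝ} (hT : 0 < T) (u : Fin m → ℝ) :
    univ.sup' univ_nonempty u ≤ LSE T u := by
  rw [Finset.sup'_le_iff]
  intro i _
  have h1 : Real.exp (u i / T) ≤ ∑ j, Real.exp (u j / T) :=
    Finset.single_le_sum (f := fun j => Real.exp (u j / T)) (fun j _ => (Real.exp_pos _).le) (mem_univ i)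
  have := Real.log_le_log (Real.exp_pos _) h1
  rw [Real.log_exp] at this
  have := mul_le_mul_of_nonneg_left this hT.le
  rw [mul_div_cancel₀ _ hT.ne'] at this
  exact this.trans_eq rfl

lemma LSE_le_max {m : ℕ} [NeZero m] {T : ℝ} (hT : 0 < T) (u : Fin m → ℝ) :
    LSE T u ≤ univ.sup' univ_nonempty u + T * Real.log m := by
  have h1 : ∑ i, Real.exp (u i / T) ≤ m * Real.exp ((univ.sup' univ_nonempty u) / T) := by
    calc ∑ i, Real.exp (u i / T) ≤ ∑ _i : Fin m, Real.exp ((univ.sup' univ_nonempty u) / T) := by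
          apply Finset.sum_le_sum
          intro i _
          exact Real.exp_le_exp.2 (div_le_div_of_nonneg_right (Finset.le_sup' u (mem_univ i)) hT.le |>.trans_eq rfl)
      _ = m * Real.exp ((univ.sup' univ_nonempty u) / T) := by
          rw [Finset.sum_const, card_univ, Fintype.card_fin, nsmul_eq_mul]
  have hpos : (0:ℝ) < ∑ i, Real.exp (u i / T) := sum_exp_pos _
  have h2 := Real.log_le_log hpos h1
  have hm : (0:ℝ) < m := by
    have : m ≠ 0 := NeZero.ne m
    positivity
  rw [Real.log_mul hm.ne' (Real.exp_pos _).ne', Real.log_exp] at h2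
  have := mul_le_mul_of_nonneg_left h2 hT.le
  rw [mul_add, mul_div_cancel₀ _ hT.ne'] at this
  unfold LSE
  linarith

lemma slack_nonneg (K : ℕ → ℕ) (T : ℕ → ℝ) (hT : ∀ ℓ, 0 < T ℓ)
    (α : (ℓ : ℕ) → Fin (K ℓ + 1) → ℝ) (hα : ∀ ℓ k, 0 ≤ α ℓ k) (ℓ : ℕ) :
    0 ≤ slack K T α ℓ := by
  induction ℓ with
  | zero =>
    simp only [slack]
    have : (1:ℝ) ≤ (K 0 : ℝ) + 1 := by linarith [Nat.cast_nonneg (K 0) (α := ℝ)]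
    exact mul_nonneg (hT 0).le (Real.log_nonneg this)
  | succ n ih =>
    simp only [slack]
    have h1 : (1:ℝ) ≤ (K (n+1) : ℝ) + 1 := by linarith [Nat.cast_nonneg (K (n+1)) (α := ℝ)]
    have h2 : 0 ≤ univ.sup' univ_nonempty (α (n+1)) :=
      le_trans (hα (n+1) 0) (Finset.le_sup' _ (mem_univ 0))
    exact add_nonneg (mul_nonneg (hT _).le (Real.log_nonneg h1)) (mul_nonneg h2 ih)


/-- Layerwise sandwich bound for the `L`-layer Deep-LSE:
`z̄⁽ℓ⁾(x) ≤ z⁽ℓ⁾(x) ≤ z̄⁽ℓ⁾(x) + Δ_ℓ` for every layer `ℓ` and every `x`. -/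
theorem deepLSE_sandwich (d : ℕ) (K : ℕ → ℕ) (T : ℕ → ℝ) (hT : ∀ ℓ, 0 < T ℓ)
    (A : (ℓ : ℕ) → Fin (K ℓ + 1) → Fin d → ℝ) (b : (ℓ : ℕ) → Fin (K ℓ + 1) → ℝ)
    (α : (ℓ : ℕ) → Fin (K ℓ + 1) → ℝ) (hα : ∀ ℓ k, 0 ≤ α ℓ k) (ℓ : ℕ) (x : Fin d → ℝ) :
    deepMaxAffine d K A b α ℓ x ≤ deepLSE d K T A b α ℓ x ∧
      deepLSE d K T A b α ℓ x ≤ deepMaxAffine d K A b α ℓ x + slack K T α ℓ := by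
  induction ℓ with
  | zero =>
    constructor
    · exact max_le_LSE (hT 0) _
    · have := LSE_le_max (m := K 0 + 1) (hT 0) (fun k => ∑ j, A 0 k j * x j + b 0 k)
      simp only [deepLSE, deepMaxAffine, slack]
      push_cast at this ⊢
      exact this
  | succ n ih =>
    obtain ⟨ih1, ih2⟩ := ih
    set z := deepLSE d K T A b α n x with hz
    set zb := deepMaxAffine d K A b α n x with hzb
    set Δ := slack K T α n with hΔ
    have hΔ0 : 0 ≤ Δ := slack_nonneg K T hT α hα n
    set u : Fin (K (n+1) + 1) → ℝ := fun k =>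
      α (n+1) k * z + ∑ j, A (n+1) k j * x j + b (n+1) k with hu
    set g : Fin (K (n+1) + 1) → ℝ := fun k =>
      α (n+1) k * zb + ∑ j, A (n+1) k j * x j + b (n+1) k with hg
    have hmax : deepMaxAffine d K A b α (n+1) x = univ.sup' univ_nonempty g := rfl
    have hlse : deepLSE d K T A b α (n+1) x = LSE (T (n+1)) u := rfl
    set αm := univ.sup' univ_nonempty (α (n+1)) with hαm
    constructor
    · rw [hmax, hlse]
      refine le_trans ?_ (max_le_LSE (hT (n+1)) u)
      rw [Finset.sup'_le_iff]
      intro k _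
      refine le_trans ?_ (Finset.le_sup' u (mem_univ k))
      have : α (n+1) k * zb ≤ α (n+1) k * z :=
        mul_le_mul_of_nonneg_left ih1 (hα (n+1) k)
      simp only [hu, hg]
      linarith
    · rw [hmax, hlse]
      have h1 := LSE_le_max (m := K (n+1) + 1) (hT (n+1)) u
      have h2 : univ.sup' univ_nonempty u ≤ univ.sup' univ_nonempty g + αm * Δ := by
        rw [Finset.sup'_le_iff]
        intro k _
        have hk : u k ≤ g k + αm * Δ := by
          have hz2 : α (n+1) k * z ≤ α (n+1) k * zb + α (n+1) k * Δ := by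
            have := mul_le_mul_of_nonneg_left ih2 (hα (n+1) k)
            rw [mul_add] at this; exact this
          have hαk : α (n+1) k * Δ ≤ αm * Δ :=
            mul_le_mul_of_nonneg_right (Finset.le_sup' _ (mem_univ k)) hΔ0
          simp only [hu, hg]
          linarith
        exact hk.trans (add_le_add_left (Finset.le_sup' g (mem_univ k)) _)
      have hslack : slack K T α (n+1)
          = T (n+1) * Real.log ((K (n+1) : ℝ) + 1) + αm * Δ := rfl
      rw [hslack]
      push_cast at h1
      linarith
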